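/- Let M : H → H be a bounded self-adjoint positive semidefinite operator with closed range, factored as M = CC* with C : D → H an injective bounded operator from a Hilbert space D. Then C* is surjective. -/

import Mathlib

open RealInnerProductSpace InnerProductSpace NNReal

set_option maxHeartbeats 1000000 in
theorem stmt19 {H D : Type*}
    [NormedAddCommGroup H] [InnerProductSpace ℝ H] [CompleteSpace H]
    [NormedAddCommGroup D] [InnerProductSpace ℝ D] [CompleteSpace D]
    (M : H →L[ℝ] H) (C : D →L[ℝ] H)
    (hsa : IsSelfAdjoint M)
    (hpsd : ∀ x : H, 0 ≤ (inner ℝ x (M x) : ℝ))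
    (hclosed : IsClosed (Set.range M))
    (hfact : M = C.comp (ContinuousLinearMap.adjoint C))
    (hCinj : Function.Injective C) :
    Function.Surjective (ContinuousLinearMap.adjoint C) := by
  set Cs := ContinuousLinearMap.adjoint C with hCs
  have hsym : ∀ x y : H, ⟪M x, y⟫ = ⟪x, M y⟫ := by
    have := (ContinuousLinearMap.isSelfAdjoint_iff_isSymmetric.mp hsa)
    intro x y; exact this x y
  set S : Submodule ℝ H := LinearMap.range (M : H →ₗ[ℝ] H) with hS
  have hSclosed : IsClosed (S : Set H) := by
    simpa [hS, LinearMap.coe_range] using hclosed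
  -- elements of Sᗮ are killed by C*
  have hkill : ∀ x : H, x ∈ Sᗮ → Cs x = 0 := by
    intro x hx
    have hMx : M x = 0 := by
      have h1 : ∀ y : H, ⟪M x, y⟫ = 0 := by
        intro y
        have h0 : ⟪M y, x⟫ = 0 := hx (M y) ⟨y, rfl⟩
        rw [hsym x y, real_inner_comm, h0]
      exact inner_self_eq_zero.mp (by rw [real_inner_comm]; exact h1 (M x))
    have hCC : C (Cs x) = 0 := by
      have := congrArg (fun T : H →L[ℝ] H => T x) hfact
      simp only [ContinuousLinearMap.comp_apply] at this
      rw [← this, hMx]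
    apply hCinj
    simpa using hCC
  -- range of C is contained in S
  have hrange : ∀ d : D, C d ∈ S := by
    intro d
    have hmem : C d ∈ Sᗮᗮ := by
      intro x hx
      have h1 : ⟪C d, x⟫ = ⟪d, Cs x⟫ :=
        (ContinuousLinearMap.adjoint_inner_right C d x).symm
      rw [real_inner_comm, h1, hkill x hx, inner_zero_right]
    rwa [Submodule.orthogonal_orthogonal_eq_closure S,
      hSclosed.submodule_topologicalClosure_eq] at hmem
  -- C is bounded below: build an equiv D ≃L S
  haveI : CompleteSpace S := hSclosed.completeSpace_coe
  let C' : D →L[ℝ] S := C.codRestrict S hrange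
  have hC'inj : Function.Injective C' := by
    intro a b hab
    apply hCinj
    simpa [C'] using congrArg Subtype.val hab
  have hC'surj : Function.Surjective C' := by
    rintro ⟨x, hx⟩
    rw [hS, LinearMap.mem_range] at hx
    obtain ⟨y, rfl⟩ := hx
    refine ⟨Cs y, Subtype.ext ?_⟩
    have := congrArg (fun T : H →L[ℝ] H => T y) hfact
    simpa [C'] using this.symm
  let e : D ≃L[ℝ] S := ContinuousLinearEquiv.ofBijective C'
    (by rw [LinearMap.ker_eq_bot]; exact hC'inj) (LinearMap.range_eq_top.mpr hC'surj)
  obtain ⟨c, hc⟩ : ∃ c : ℝ≥0, AntilipschitzWith c C' := ⟨_, e.antilipschitz⟩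
  set c' : ℝ := (c : ℝ) + 1 with hc'
  have hc'pos : 0 < c' := by positivity
  have hbelow : ∀ d : D, ‖d‖ ≤ c' * ‖C d‖ := by
    intro d
    have h1 := hc.le_mul_dist d 0
    have h2 : ‖d‖ ≤ (c : ℝ) * ‖C d‖ := by simpa [C', dist_eq_norm] using h1
    nlinarith [norm_nonneg (C d)]
  -- the bilinear form of C* ∘ C is coercive
  set T : D →L[ℝ] D := Cs.comp C with hT
  set B : D →L[ℝ] D →L[ℝ] ℝ := (innerSL ℝ).comp T with hB
  have hBapp : ∀ u v : D, B u v = ⟪T u, v⟫ := fun u v => rfl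
  have hcoer : IsCoercive B := by
    refine ⟨(c' * c')⁻¹, by positivity, fun u => ?_⟩
    have h1 : B u u = ‖C u‖ ^ 2 := by
      rw [hBapp]
      simp only [hT, ContinuousLinearMap.comp_apply, hCs]
      rw [ContinuousLinearMap.adjoint_inner_left]
      exact real_inner_self_eq_norm_sq (C u)
    have h2 := hbelow u
    rw [h1]
    rw [mul_assoc, inv_mul_le_iff₀ (by positivity)]
    nlinarith [norm_nonneg u, norm_nonneg (C u)]
  -- Lax-Milgram: T is surjective
  have hTeq : ∀ u : D, T u = continuousLinearMapOfBilin B u := fun u =>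
    unique_continuousLinearMapOfBilin B (fun w => (hBapp u w).symm)
  have hTsurj : Function.Surjective T := by
    intro d
    have htop := hcoer.range_eq_top
    rw [LinearMap.range_eq_top] at htop
    obtain ⟨u, hu⟩ := htop d
    exact ⟨u, by rw [hTeq u]; exact hu⟩
  intro d
  obtain ⟨u, hu⟩ := hTsurj d
  exact ⟨C u, hu⟩
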